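/- For the super-operator Φ(X) = ½|0⟩⟨0|X|0⟩⟨0| + (i/2)|0⟩⟨1|X|1⟩⟨0| on L(C²), one has ‖Φ‖_{∞→p} = 1 while ‖Φ‖^H_{∞→p} = 1/√2 for every p ∈ [1, ∞]. -/

import Mathlib

open scoped ENNReal
open Matrix
open scoped ComplexOrder

noncomputable section

namespace SchattenNotes

/-- The vector of singular values of a matrix. -/
def singVal {m n : Type*} [Fintype m] [Fintype n] [DecidableEq n]
    (X : Matrix m n ℂ) (i : n) : ℝ :=
  Real.sqrt (((Matrix.posSemidef_conjTranspose_mul_self X).1).eigenvalues i)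

/-- The Schatten `p`-norm, for `p ∈ [1, ∞]` encoded as `p : ℝ≥0∞`. -/
def schatten {m n : Type*} [Fintype m] [Fintype n] [DecidableEq n]
    (p : ℝ≥0∞) (X : Matrix m n ℂ) : ℝ :=
  if p = ∞ then ⨆ i, singVal X i
  else (∑ i, singVal X i ^ p.toReal) ^ (1 / p.toReal)

/-- The induced `q → p` super-operator norm. -/
def opNorm {m n : Type*} [Fintype m] [Fintype n] [DecidableEq m] [DecidableEq n]
    (q p : ℝ≥0∞) (Φ : Matrix n n ℂ →ₗ[ℂ] Matrix m m ℂ) : ℝ :=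
  ⨆ X : {X : Matrix n n ℂ // X ≠ 0}, schatten p (Φ X.1) / schatten q X.1

/-- The induced `q → p` super-operator norm restricted to Hermitian inputs. -/
def opNormH {m n : Type*} [Fintype m] [Fintype n] [DecidableEq m] [DecidableEq n]
    (q p : ℝ≥0∞) (Φ : Matrix n n ℂ →ₗ[ℂ] Matrix m m ℂ) : ℝ :=
  ⨆ X : {X : Matrix n n ℂ // X.IsHermitian ∧ X ≠ 0}, schatten p (Φ X.1) / schatten q X.1

/-- The super-operator `Φ ⊗ I_{L(H)}`, where `H` has orthonormal basis indexed by `k`. -/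
def tensorId {m n : Type*} [Fintype m] [Fintype n] (k : Type*) [Fintype k]
    (Φ : Matrix n n ℂ →ₗ[ℂ] Matrix m m ℂ) :
    Matrix (n × k) (n × k) ℂ →ₗ[ℂ] Matrix (m × k) (m × k) ℂ where
  toFun X := fun r s => Φ (fun i j => X (i, r.2) (j, s.2)) r.1 s.1
  map_add' X Y := by
    funext r s
    show Φ ((fun i j => X (i, r.2) (j, s.2)) + fun i j => Y (i, r.2) (j, s.2)) r.1 s.1 = _
    exact congrFun (congrFun (_root_.map_add Φ (Matrix.of fun i j => X (i, r.2) (j, s.2)) (Matrix.of fun i j => Y (i, r.2) (j, s.2))) r.1) s.1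
  map_smul' c X := by
    funext r s
    show Φ (c • fun i j => X (i, r.2) (j, s.2)) r.1 s.1 = _
    exact congrFun (congrFun (_root_.map_smul Φ c (Matrix.of fun i j => X (i, r.2) (j, s.2))) r.1) s.1

/-- Complete positivity of a super-operator. -/
def IsCP {m n : Type*} [Fintype m] [Fintype n]
    (Φ : Matrix n n ℂ →ₗ[ℂ] Matrix m m ℂ) : Prop :=
  ∀ (k : ℕ) (X : Matrix (n × Fin k) (n × Fin k) ℂ),
    X.PosSemidef → (tensorId (Fin k) Φ X).PosSemidef

/-- Trace preservation of a super-operator. -/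
def IsTP {m n : Type*} [Fintype m] [Fintype n]
    (Φ : Matrix n n ℂ →ₗ[ℂ] Matrix m m ℂ) : Prop :=
  ∀ X : Matrix n n ℂ, (Φ X).trace = X.trace

/-- The rank-one operator `|u⟩⟨v|`. -/
def outer {m n : Type*} (u : m → ℂ) (v : n → ℂ) : Matrix m n ℂ :=
  Matrix.vecMulVec u (star v)

/-- The quadratic form `⟨a|X|a⟩`. -/
def sand {n : Type*} [Fintype n] (a : n → ℂ) (X : Matrix n n ℂ) : ℂ :=
  star a ⬝ᵥ X *ᵥ a

/-- A unit vector. -/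
def IsUnit' {n : Type*} [Fintype n] (u : n → ℂ) : Prop := star u ⬝ᵥ u = 1


def ket0 : Fin 2 → ℂ := ![1, 0]
def ket1 : Fin 2 → ℂ := ![0, 1]


lemma iSup_fin_two (f : Fin 2 → ℝ) : (⨆ i, f i) = max (f 0) (f 1) := by
  apply le_antisymm
  · exact ciSup_le fun i => by fin_cases i; exacts [le_max_left _ _, le_max_right _ _]
  · exact max_le (le_ciSup (Set.finite_range f).bddAbove 0)
      (le_ciSup (Set.finite_range f).bddAbove 1)

lemma trace_eq_sum_eigs {A : Matrix (Fin 2) (Fin 2) ℂ} (hA : A.IsHermitian) :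
    A.trace = (hA.eigenvalues 0 : ℂ) + (hA.eigenvalues 1 : ℂ) := by
  rw [hA.trace_eq_sum_eigenvalues, Fin.sum_univ_two]; rfl

/-- Abbreviation for the eigenvalues of `XᴴX`. -/
def μ (X : Matrix (Fin 2) (Fin 2) ℂ) (i : Fin 2) : ℝ :=
  ((Matrix.posSemidef_conjTranspose_mul_self X).1).eigenvalues i

lemma singVal_eq (X : Matrix (Fin 2) (Fin 2) ℂ) (i : Fin 2) :
    singVal X i = Real.sqrt (μ X i) := rfl

lemma mu_nonneg (X : Matrix (Fin 2) (Fin 2) ℂ) (i : Fin 2) : 0 ≤ μ X i :=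
  (Matrix.posSemidef_conjTranspose_mul_self X).eigenvalues_nonneg i

lemma mu_sum (X : Matrix (Fin 2) (Fin 2) ℂ) :
    μ X 0 + μ X 1 = Complex.normSq (X 0 0) + Complex.normSq (X 0 1)
      + Complex.normSq (X 1 0) + Complex.normSq (X 1 1) := by
  have h := trace_eq_sum_eigs (Matrix.posSemidef_conjTranspose_mul_self X).1
  have h2 : (Xᴴ * X).trace = ((Complex.normSq (X 0 0) + Complex.normSq (X 0 1)
      + Complex.normSq (X 1 0) + Complex.normSq (X 1 1) : ℝ) : ℂ) := by
    simp [Matrix.trace, Matrix.mul_apply, Fin.sum_univ_two, Matrix.conjTranspose_apply,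
      Matrix.diag, ← Complex.normSq_eq_conj_mul_self]
    ring
  rw [h2] at h
  exact_mod_cast h.symm

lemma mu_prod (X : Matrix (Fin 2) (Fin 2) ℂ) :
    μ X 0 * μ X 1 = Complex.normSq (X 0 0 * X 1 1 - X 0 1 * X 1 0) := by
  have h : (Xᴴ * X).det = ((μ X 0 : ℂ) * (μ X 1 : ℂ)) := by
    rw [((Matrix.posSemidef_conjTranspose_mul_self X).1).det_eq_prod_eigenvalues,
      Fin.prod_univ_two]
    norm_cast
  rw [Matrix.det_mul, Matrix.det_conjTranspose, Matrix.det_fin_two,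
    Complex.star_def, ← Complex.normSq_eq_conj_mul_self] at h
  exact_mod_cast h.symm

lemma toReal_pos {p : ℝ≥0∞} (hp : 1 ≤ p) (hne : p ≠ ∞) : 1 ≤ p.toReal := by
  rw [← ENNReal.toReal_one]
  exact ENNReal.toReal_mono hne hp

/-- schatten of a matrix with one singular value `t` and one `0`. -/
lemma schatten_of_mu {X : Matrix (Fin 2) (Fin 2) ℂ} {t : ℝ} (ht : 0 ≤ t)
    (h : (μ X 0 = t ^ 2 ∧ μ X 1 = 0) ∨ (μ X 0 = 0 ∧ μ X 1 = t ^ 2))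
    (p : ℝ≥0∞) (hp : 1 ≤ p) : schatten p X = t := by
  have h0 : Real.sqrt (t ^ 2) = t := Real.sqrt_sq ht
  by_cases hpt : p = ∞
  · rw [schatten, if_pos hpt, iSup_fin_two, singVal_eq, singVal_eq]
    rcases h with ⟨h1, h2⟩ | ⟨h1, h2⟩ <;> rw [h1, h2] <;>
      simp [h0, Real.sqrt_zero, max_eq_left ht, max_eq_right ht]
  · have hr := toReal_pos hp hpt
    have hr0 : p.toReal ≠ 0 := by linarith
    rw [schatten, if_neg hpt, Fin.sum_univ_two, singVal_eq, singVal_eq]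
    rcases h with ⟨h1, h2⟩ | ⟨h1, h2⟩ <;> rw [h1, h2] <;>
      rw [Real.sqrt_zero, Real.zero_rpow hr0, h0] <;>
      [rw [add_zero]; rw [zero_add]] <;>
      rw [← Real.rpow_mul ht, mul_one_div_cancel hr0, Real.rpow_one]

lemma key (a b s0 s1 t : ℝ) (ht : t ≤ s0) (hsum : a + b = s0 + s1)
    (hprod : a * b ≤ s0 * s1) (hle : a ≤ b) : t ≤ b := by
  by_contra h
  push_neg at h
  have h1 : b < s0 := lt_of_lt_of_le h ht
  have h2 : s1 < b := by linarith
  have h3 : a * b = (s0 + s1 - b) * b := by rw [show a = s0 + s1 - b by linarith]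
  nlinarith [mul_pos (sub_pos.2 h1) (sub_pos.2 h2), h3]

lemma abs_diag_le (X : Matrix (Fin 2) (Fin 2) ℂ) (i : Fin 2) :
    ‖X i i‖ ≤ schatten ∞ X := by
  have hs := mu_sum X
  have hpr := mu_prod X
  have hC : Complex.normSq (X 0 0 * X 1 1 - X 0 1 * X 1 0) ≤
      (Complex.normSq (X 0 0) + Complex.normSq (X 1 0)) *
        (Complex.normSq (X 0 1) + Complex.normSq (X 1 1)) := by
    have h1 : ‖X 0 0 * X 1 1 - X 0 1 * X 1 0‖ ≤
        ‖X 0 0‖ * ‖X 1 1‖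
          + ‖X 0 1‖ * ‖X 1 0‖ := by
      calc ‖X 0 0 * X 1 1 - X 0 1 * X 1 0‖
          ≤ ‖X 0 0 * X 1 1‖ + ‖X 0 1 * X 1 0‖ := by
            simpa [sub_eq_add_neg] using norm_add_le (X 0 0 * X 1 1) (-(X 0 1 * X 1 0))
        _ = _ := by simp [_root_.map_mul]
    have h2 : ∀ z : ℂ, Complex.normSq z = ‖z‖ ^ 2 :=
      fun z => (Complex.sq_norm z).symm
    simp only [h2]
    nlinarith [norm_nonneg (X 0 0), norm_nonneg (X 0 1),
      norm_nonneg (X 1 0), norm_nonneg (X 1 1),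
      norm_nonneg (X 0 0 * X 1 1 - X 0 1 * X 1 0),
      sq_nonneg (‖X 0 0‖ * ‖X 0 1‖ -
        ‖X 1 0‖ * ‖X 1 1‖)]
  have hC' : μ X 0 * μ X 1 ≤
      (Complex.normSq (X 0 0) + Complex.normSq (X 1 0)) *
        (Complex.normSq (X 0 1) + Complex.normSq (X 1 1)) := by
    rw [hpr]; exact hC
  set s0 := Complex.normSq (X 0 0) + Complex.normSq (X 1 0) with hs0
  set s1 := Complex.normSq (X 0 1) + Complex.normSq (X 1 1) with hs1
  have hs' : μ X 0 + μ X 1 = s0 + s1 := by rw [hs0, hs1, hs]; ring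
  have hmax : Complex.normSq (X i i) ≤ max (μ X 0) (μ X 1) := by
    fin_cases i
    · show Complex.normSq (X 0 0) ≤ _
      have ht : Complex.normSq (X 0 0) ≤ s0 := by
        rw [hs0]; nlinarith [Complex.normSq_nonneg (X 1 0)]
      rcases le_total (μ X 0) (μ X 1) with hle | hle
      · exact le_max_of_le_right (key (μ X 0) (μ X 1) s0 s1 _ ht hs' hC' hle)
      · refine le_max_of_le_left (key (μ X 1) (μ X 0) s0 s1 _ ht (by linarith) ?_ hle)
        rw [mul_comm (μ X 1) (μ X 0)]; exact hC'
    · show Complex.normSq (X 1 1) ≤ _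
      have ht : Complex.normSq (X 1 1) ≤ s1 := by
        rw [hs1]; nlinarith [Complex.normSq_nonneg (X 0 1)]
      have hC'' : μ X 0 * μ X 1 ≤ s1 * s0 := by rw [mul_comm s1 s0]; exact hC'
      rcases le_total (μ X 0) (μ X 1) with hle | hle
      · exact le_max_of_le_right (key (μ X 0) (μ X 1) s1 s0 _ ht (by linarith) hC'' hle)
      · refine le_max_of_le_left (key (μ X 1) (μ X 0) s1 s0 _ ht (by linarith) ?_ hle)
        rw [mul_comm (μ X 1) (μ X 0)]; exact hC''
  rw [schatten, if_pos rfl, iSup_fin_two, singVal_eq, singVal_eq]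
  have habs : ‖X i i‖ = Real.sqrt (Complex.normSq (X i i)) := Complex.norm_def _
  rw [habs]
  rcases le_total (μ X 0) (μ X 1) with hle | hle
  · rw [max_eq_right hle] at hmax
    exact le_max_of_le_right (Real.sqrt_le_sqrt hmax)
  · rw [max_eq_left hle] at hmax
    exact le_max_of_le_left (Real.sqrt_le_sqrt hmax)

lemma schatten_top_nonneg (X : Matrix (Fin 2) (Fin 2) ℂ) : 0 ≤ schatten ∞ X :=
  le_trans (norm_nonneg _) (abs_diag_le X 0)

lemma schatten_top_eq_one {X : Matrix (Fin 2) (Fin 2) ℂ} (h : Xᴴ * X = 1) :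
    schatten ∞ X = 1 := by
  have h1 : (1 : Matrix (Fin 2) (Fin 2) ℂ).trace = (μ X 0 : ℂ) + (μ X 1 : ℂ) := by
    rw [← h]; exact trace_eq_sum_eigs (Matrix.posSemidef_conjTranspose_mul_self X).1
  have h2 : (1 : Matrix (Fin 2) (Fin 2) ℂ).det = (μ X 0 : ℂ) * (μ X 1 : ℂ) := by
    rw [← h]
    rw [((Matrix.posSemidef_conjTranspose_mul_self X).1).det_eq_prod_eigenvalues,
      Fin.prod_univ_two]
    norm_cast
  rw [Matrix.trace_one] at h1
  rw [Matrix.det_one] at h2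
  have hsum : μ X 0 + μ X 1 = 2 := by
    have : ((μ X 0 + μ X 1 : ℝ) : ℂ) = ((2 : ℝ) : ℂ) := by push_cast; rw [← h1]; norm_num
    exact_mod_cast this
  have hprod : μ X 0 * μ X 1 = 1 := by
    have : ((μ X 0 * μ X 1 : ℝ) : ℂ) = ((1 : ℝ) : ℂ) := by push_cast; rw [← h2]
    exact_mod_cast this
  have e0 : μ X 0 = 1 := by nlinarith [sq_nonneg (μ X 0 - μ X 1)]
  have e1 : μ X 1 = 1 := by nlinarith [sq_nonneg (μ X 0 - μ X 1)]
  rw [schatten, if_pos rfl, iSup_fin_two, singVal_eq, singVal_eq, e0, e1, Real.sqrt_one]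
  simp

/-- For `Φ(X) = ½|0⟩⟨0|X|0⟩⟨0| + (i/2)|0⟩⟨1|X|1⟩⟨0|`, one has `‖Φ‖_{∞→p} = 1` while
`‖Φ‖^H_{∞→p} = 1/√2` for every `p ∈ [1,∞]`. -/
theorem stmt13 (Φ : Matrix (Fin 2) (Fin 2) ℂ →ₗ[ℂ] Matrix (Fin 2) (Fin 2) ℂ)
    (hΦ : ∀ X, Φ X = (1 / 2 : ℂ) • (outer ket0 ket0 * X * outer ket0 ket0)
      + (Complex.I / 2) • (outer ket0 ket1 * X * outer ket1 ket0))
    (p : ℝ≥0∞) (hp : 1 ≤ p) :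
    opNorm ∞ p Φ = 1 ∧ opNormH ∞ p Φ = 1 / Real.sqrt 2 := by
  -- explicit form of Φ
  have hΦ' : ∀ X : Matrix (Fin 2) (Fin 2) ℂ,
      Φ X = !![X 0 0 / 2 + Complex.I / 2 * X 1 1, 0; 0, 0] := by
    intro X
    rw [hΦ]
    ext i j
    fin_cases i <;> fin_cases j <;>
      simp [outer, ket0, ket1, Matrix.vecMulVec_apply, Matrix.mul_apply, Fin.sum_univ_two,
        Matrix.smul_apply, Matrix.add_apply, -Matrix.cons_vecMulVec, -Matrix.vecMulVec_cons] <;> ring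
  -- the numerator
  have hnum : ∀ X : Matrix (Fin 2) (Fin 2) ℂ,
      schatten p (Φ X) = ‖X 0 0 / 2 + Complex.I / 2 * X 1 1‖ := by
    intro X
    rw [hΦ' X]
    set c : ℂ := X 0 0 / 2 + Complex.I / 2 * X 1 1 with hc
    have hsum := mu_sum (!![c, 0; 0, 0])
    have hprod := mu_prod (!![c, 0; 0, 0])
    have hsum' : μ (!![c, 0; 0, 0]) 0 + μ (!![c, 0; 0, 0]) 1 = Complex.normSq c := by
      rw [hsum]; simp
    have hprod' : μ (!![c, 0; 0, 0]) 0 * μ (!![c, 0; 0, 0]) 1 = 0 := by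
      rw [hprod]; simp
    have habs2 : Complex.normSq c = ‖c‖ ^ 2 := (Complex.sq_norm c).symm
    refine schatten_of_mu (norm_nonneg c) ?_ p hp
    rcases mul_eq_zero.mp hprod' with h0 | h0
    · right
      refine ⟨h0, ?_⟩
      rw [← habs2, ← hsum', h0, zero_add]
    · left
      refine ⟨?_, h0⟩
      rw [← habs2, ← hsum', h0, add_zero]
  -- general upper bound
  have bound1 : ∀ X : Matrix (Fin 2) (Fin 2) ℂ,
      schatten p (Φ X) / schatten ∞ X ≤ 1 := by
    intro X
    rw [hnum X]
    have hd0 := abs_diag_le X 0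
    have hd1 := abs_diag_le X 1
    refine div_le_one_of_le₀ ?_ (schatten_top_nonneg X)
    calc ‖X 0 0 / 2 + Complex.I / 2 * X 1 1‖
        ≤ ‖X 0 0 / 2‖ + ‖Complex.I / 2 * X 1 1‖ :=
          norm_add_le _ _
      _ = ‖X 0 0‖ / 2 + ‖X 1 1‖ / 2 := by
          rw [norm_div, norm_mul, norm_div, Complex.norm_I, Complex.norm_two]
          ring
      _ ≤ schatten ∞ X := by linarith
  -- the witness for part 1
  set X₀ : Matrix (Fin 2) (Fin 2) ℂ := !![1, 0; 0, -Complex.I] with hX₀def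
  have hX₀u : X₀ᴴ * X₀ = 1 := by
    ext i j
    fin_cases i <;> fin_cases j <;>
      simp [hX₀def, Matrix.mul_apply, Fin.sum_univ_two, Matrix.conjTranspose_apply,
        Matrix.one_apply, Complex.ext_iff]
  have hX₀ne : X₀ ≠ 0 := by
    intro h
    have := congrArg (fun M : Matrix (Fin 2) (Fin 2) ℂ => M 0 0) h
    simp [hX₀def] at this
  have hval1 : schatten p (Φ X₀) / schatten ∞ X₀ = 1 := by
    rw [hnum X₀, schatten_top_eq_one hX₀u]
    have : (X₀ 0 0 / 2 + Complex.I / 2 * X₀ 1 1 : ℂ) = 1 := by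
      simp [hX₀def, Complex.ext_iff]
      norm_num
    rw [this]
    simp
  -- Hermitian upper bound
  have bound2 : ∀ X : Matrix (Fin 2) (Fin 2) ℂ, X.IsHermitian →
      schatten p (Φ X) / schatten ∞ X ≤ 1 / Real.sqrt 2 := by
    intro X hX
    have h00 : X 0 0 = ((X 0 0).re : ℂ) := by
      have := congr_fun (congr_fun hX.symm 0) 0
      rw [Matrix.conjTranspose_apply] at this
      exact (Complex.conj_eq_iff_re.mp this.symm).symm
    have h11 : X 1 1 = ((X 1 1).re : ℂ) := by
      have := congr_fun (congr_fun hX.symm 1) 1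
      rw [Matrix.conjTranspose_apply] at this
      exact (Complex.conj_eq_iff_re.mp this.symm).symm
    set r : ℝ := (X 0 0).re with hr
    set s : ℝ := (X 1 1).re with hs
    have hnum' : ‖X 0 0 / 2 + Complex.I / 2 * X 1 1‖
        = Real.sqrt ((r / 2) ^ 2 + (s / 2) ^ 2) := by
      have hz : (X 0 0 / 2 + Complex.I / 2 * X 1 1 : ℂ)
          = ((r / 2 : ℝ) : ℂ) + ((s / 2 : ℝ) : ℂ) * Complex.I := by
        rw [h00, h11]; push_cast; ring
      rw [hz, Complex.norm_add_mul_I]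
    rw [hnum X, hnum']
    have hd0 : |r| ≤ schatten ∞ X := by
      have := abs_diag_le X 0
      rwa [h00, Complex.norm_real, Real.norm_eq_abs] at this
    have hd1 : |s| ≤ schatten ∞ X := by
      have := abs_diag_le X 1
      rwa [h11, Complex.norm_real, Real.norm_eq_abs] at this
    set D := schatten ∞ X with hD
    have hDnn : 0 ≤ D := schatten_top_nonneg X
    rcases eq_or_lt_of_le hDnn with hD0 | hD0
    · have hr0 : r = 0 := by
        have := abs_nonneg r; have := hd0; rw [← hD0] at hd0
        have : |r| = 0 := le_antisymm hd0 (abs_nonneg r)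
        exact abs_eq_zero.mp this
      have hs0 : s = 0 := by
        rw [← hD0] at hd1
        have : |s| = 0 := le_antisymm hd1 (abs_nonneg s)
        exact abs_eq_zero.mp this
      rw [hr0, hs0]
      norm_num
    · rw [div_le_div_iff₀ hD0 (by positivity : (0:ℝ) < Real.sqrt 2)]
      have hmul : Real.sqrt ((r / 2) ^ 2 + (s / 2) ^ 2) * Real.sqrt 2
          = Real.sqrt (((r / 2) ^ 2 + (s / 2) ^ 2) * 2) :=
        (Real.sqrt_mul (by positivity) 2).symm
      rw [hmul, one_mul]
      have : ((r / 2) ^ 2 + (s / 2) ^ 2) * 2 ≤ D ^ 2 := by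
        nlinarith [sq_abs r, sq_abs s, mul_self_le_mul_self (abs_nonneg r) hd0,
          mul_self_le_mul_self (abs_nonneg s) hd1]
      calc Real.sqrt (((r / 2) ^ 2 + (s / 2) ^ 2) * 2) ≤ Real.sqrt (D ^ 2) :=
            Real.sqrt_le_sqrt this
        _ = D := Real.sqrt_sq hDnn
  -- the witness for part 2
  have h1u : (1 : Matrix (Fin 2) (Fin 2) ℂ)ᴴ * 1 = 1 := by simp
  have h1ne : (1 : Matrix (Fin 2) (Fin 2) ℂ) ≠ 0 := by
    intro h
    have := congrArg (fun M : Matrix (Fin 2) (Fin 2) ℂ => M 0 0) h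
    simp at this
  have hval2 : schatten p (Φ 1) / schatten ∞ (1 : Matrix (Fin 2) (Fin 2) ℂ)
      = 1 / Real.sqrt 2 := by
    rw [hnum 1, schatten_top_eq_one h1u]
    have hz : ((1 : Matrix (Fin 2) (Fin 2) ℂ) 0 0 / 2
        + Complex.I / 2 * (1 : Matrix (Fin 2) (Fin 2) ℂ) 1 1 : ℂ)
        = ((1 / 2 : ℝ) : ℂ) + ((1 / 2 : ℝ) : ℂ) * Complex.I := by
      simp [Matrix.one_apply]; push_cast; ring
    rw [hz, Complex.norm_add_mul_I, div_one]
    rw [show ((1:ℝ)/2)^2 + ((1:ℝ)/2)^2 = (2:ℝ)⁻¹ by norm_num, Real.sqrt_inv, one_div]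
  constructor
  · -- opNorm = 1
    rw [opNorm]
    haveI : Nonempty {X : Matrix (Fin 2) (Fin 2) ℂ // X ≠ 0} := ⟨⟨X₀, hX₀ne⟩⟩
    apply le_antisymm
    · exact ciSup_le fun X => bound1 X.1
    · have hb : BddAbove (Set.range fun X : {X : Matrix (Fin 2) (Fin 2) ℂ // X ≠ 0} =>
          schatten p (Φ X.1) / schatten ∞ X.1) := ⟨1, by rintro y ⟨X, rfl⟩; exact bound1 X.1⟩
      calc (1 : ℝ) = schatten p (Φ X₀) / schatten ∞ X₀ := hval1.symm
        _ ≤ _ := le_ciSup hb ⟨X₀, hX₀ne⟩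
  · -- opNormH = 1/√2
    rw [opNormH]
    haveI : Nonempty {X : Matrix (Fin 2) (Fin 2) ℂ // X.IsHermitian ∧ X ≠ 0} :=
      ⟨⟨1, Matrix.isHermitian_one, h1ne⟩⟩
    apply le_antisymm
    · exact ciSup_le fun X => bound2 X.1 X.2.1
    · have hb : BddAbove (Set.range
          fun X : {X : Matrix (Fin 2) (Fin 2) ℂ // X.IsHermitian ∧ X ≠ 0} =>
          schatten p (Φ X.1) / schatten ∞ X.1) :=
        ⟨1 / Real.sqrt 2, by rintro y ⟨X, rfl⟩; exact bound2 X.1 X.2.1⟩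
      calc (1 / Real.sqrt 2 : ℝ)
          = schatten p (Φ 1) / schatten ∞ (1 : Matrix (Fin 2) (Fin 2) ℂ) := hval2.symm
        _ ≤ _ := le_ciSup hb ⟨1, Matrix.isHermitian_one, h1ne⟩


end SchattenNotes
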